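/- The map ℰ : sym_e(G) → 𝙰^G is an embedding: (1) it is equivariant, ℰ(Θ^h φ) = h·ℰ(φ) for all h ∈ G and φ ∈ sym_e(G); (2) it is continuous and injective; indeed, if x = ℰ(φ) and s_1, …, s_n ∈ S ∪ S⁻¹ then φ(s_1⋯s_n) = x_e(s_1) x_{s_1}(s_2) x_{s_1 s_2}(s_3) ⋯ x_{s_1⋯s_{n−1}}(s_n). Moreover, for every ρ ∈ ℕ, ℰ(sym_ρ(G)) ⊆ 𝙰_ρ^G, and ℰ restricted to sym_ρ(G) is a homeomorphism onto its image (its inverse ℰ⁻¹ : ℰ(sym_ρ(G)) → sym_e(G) is continuous). -/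

import Mathlib

/- The map ℰ : sym_e(G) → 𝙰^G is an embedding; it restricts to a homeomorphism of
   sym_ρ(G) onto its image inside 𝙰_ρ^G. -/

namespace Stmt11

abbrev G (r : ℕ) : Type := FreeGroup (Fin r)

instance (r : ℕ) : TopologicalSpace (G r) := ⊥

def SS (r : ℕ) : Set (G r) :=
  {g | ∃ i : Fin r, g = FreeGroup.of i ∨ g = (FreeGroup.of i)⁻¹}

abbrev A (r : ℕ) : Type := SS r → G r

/-- The topology of pointwise convergence of a bijection together with its inverse. -/
instance (r : ℕ) : TopologicalSpace (Equiv.Perm (G r)) :=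
  TopologicalSpace.induced
    (fun φ : Equiv.Perm (G r) => ((φ : G r → G r), (φ.symm : G r → G r))) inferInstance

/-- `sym_e(G)`: bijections of `G` fixing the identity. -/
abbrev symE (r : ℕ) : Type := {φ : Equiv.Perm (G r) // φ 1 = 1}

def shift (r : ℕ) (g : G r) (x : G r → A r) : G r → A r := fun f => x (g⁻¹ * f)

/-- The action `Θ` of `G` on `sym_e(G)`: `(Θ^h φ)(g) = φ(h⁻¹)⁻¹ φ(h⁻¹ g)`. -/
def theta (r : ℕ) (h : G r) (φ : Equiv.Perm (G r)) : Equiv.Perm (G r) :=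
  (Equiv.mulLeft h⁻¹).trans (φ.trans (Equiv.mulLeft (φ h⁻¹)⁻¹))

/-- `ℰ : sym_e(G) → 𝙰^G`, `ℰ(φ)_h(s) = φ(h)⁻¹ φ(h s)`. -/
def E (r : ℕ) (φ : Equiv.Perm (G r)) : G r → A r :=
  fun h s => (φ h)⁻¹ * φ (h * s.val)

def InSymRho (r ρ : ℕ) (φ : Equiv.Perm (G r)) : Prop :=
  φ 1 = 1 ∧
    ∀ (g s : G r), s ∈ SS r →
      ((φ g)⁻¹ * φ (g * s)).norm ≤ ρ ∧ ((φ.symm g)⁻¹ * φ.symm (g * s)).norm ≤ ρ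

/-- The iterated product `x_e(s₁) x_{s₁}(s₂) ⋯ x_{s₁⋯s_{n-1}}(s_n)` (started at `g`). -/
def wordEval (r : ℕ) (x : G r → A r) : G r → List (SS r) → G r
  | _, [] => 1
  | g, s :: l => x g s * wordEval r x (g * s.val) l

open Topology Filter

/-! ### Auxiliary material -/

instance (r : ℕ) : DiscreteTopology (G r) := ⟨rfl⟩

instance (r : ℕ) : ContinuousMul (G r) := ⟨continuous_of_discreteTopology⟩

instance (r : ℕ) : ContinuousInv (G r) := ⟨continuous_of_discreteTopology⟩

/-- The element of `SS r` corresponding to a letter. -/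
def letter (r : ℕ) (p : Fin r × Bool) : SS r :=
  ⟨if p.2 then FreeGroup.of p.1 else (FreeGroup.of p.1)⁻¹,
   ⟨p.1, by cases h : p.2 <;> simp [h]⟩⟩

lemma letter_surjective (r : ℕ) : Function.Surjective (letter r) := by
  rintro ⟨g, i, (rfl | rfl)⟩
  · exact ⟨(i, true), rfl⟩
  · exact ⟨(i, false), rfl⟩

instance (r : ℕ) : Finite (SS r) := Finite.of_surjective _ (letter_surjective r)

lemma letter_val_true (r : ℕ) (a : Fin r) :
    (letter r (a, true)).val = FreeGroup.mk [(a, true)] := by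
  simp [letter]; rfl

lemma letter_val_false (r : ℕ) (a : Fin r) :
    (letter r (a, false)).val = FreeGroup.mk [(a, false)] := by
  simp only [letter, if_neg Bool.false_ne_true]
  rw [show FreeGroup.of a = FreeGroup.mk [(a, true)] from rfl, FreeGroup.inv_mk]
  simp [FreeGroup.invRev]

lemma prod_map_letter (r : ℕ) (L : List (Fin r × Bool)) :
    ((L.map (letter r)).map Subtype.val).prod = FreeGroup.mk L := by
  induction L with
  | nil => simp [FreeGroup.one_eq_mk]
  | cons p L ih =>
    obtain ⟨a, b⟩ := p
    have hcons : FreeGroup.mk ((a, b) :: L) = FreeGroup.mk [(a, b)] * FreeGroup.mk L := by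
      rw [FreeGroup.mul_mk]; rfl
    rw [List.map_cons, List.map_cons, List.prod_cons, ih, hcons]
    cases b
    · rw [letter_val_false]
    · rw [letter_val_true]

/-- Every element of the free group is the product of a word in `SS r`, whose prefixes
all have norm at most the norm of the element, and whose length is the norm. -/
lemma exists_list (r : ℕ) (g : G r) :
    ∃ l : List (SS r), (l.map Subtype.val).prod = g ∧ l.length = g.norm ∧
      ∀ p, p <+: l → ((p.map Subtype.val).prod).norm ≤ g.norm := by
  refine ⟨g.toWord.map (letter r), ?_, ?_, ?_⟩
  · rw [prod_map_letter, FreeGroup.mk_toWord]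
  · simp [FreeGroup.norm]
  · intro p hp
    obtain ⟨t, ht⟩ := hp
    have hlen : p.length ≤ (g.toWord.map (letter r)).length := by
      rw [← ht]; simp
    have hp' : p = (g.toWord.take p.length).map (letter r) := by
      have h2 := congrArg (List.take p.length) ht
      rw [List.take_left] at h2
      exact h2.trans List.map_take.symm
    rw [hp', prod_map_letter]
    calc (FreeGroup.mk (g.toWord.take p.length)).norm
        ≤ (g.toWord.take p.length).length := FreeGroup.norm_mk_le
      _ ≤ g.toWord.length := by simp [List.length_take]
      _ = g.norm := rfl

lemma mul_wordEval (r : ℕ) (φ : Equiv.Perm (G r)) :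
    ∀ (l : List (SS r)) (g : G r),
      φ g * wordEval r (E r φ) g l = φ (g * (l.map Subtype.val).prod)
  | [], g => by simp [wordEval]
  | s :: l, g => by
    simp only [wordEval, List.map_cons, List.prod_cons, E]
    rw [← mul_assoc, ← mul_assoc, mul_inv_cancel, one_mul,
      mul_wordEval r φ l (g * s.val), mul_assoc]

lemma wordEval_formula (r : ℕ) (φ : Equiv.Perm (G r)) (hφ : φ 1 = 1) (l : List (SS r)) :
    φ ((l.map Subtype.val).prod) = wordEval r (E r φ) 1 l := by
  have h := mul_wordEval r φ l 1
  rw [hφ, one_mul, one_mul] at h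
  exact h.symm

lemma E_injective (r : ℕ) {φ ψ : Equiv.Perm (G r)} (hφ : φ 1 = 1) (hψ : ψ 1 = 1)
    (h : E r φ = E r ψ) : φ = ψ := by
  apply Equiv.ext
  intro g
  obtain ⟨l, hl, -, -⟩ := exists_list r g
  rw [← hl, wordEval_formula r φ hφ, wordEval_formula r ψ hψ, h]

lemma continuous_wordEval (r : ℕ) :
    ∀ (l : List (SS r)) (g : G r), Continuous (fun x : G r → A r => wordEval r x g l)
  | [], _ => continuous_const
  | s :: l, g => by
    show Continuous fun x : G r → A r => x g s * wordEval r x (g * s.val) l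
    exact (show Continuous fun x : G r → A r => x g s from continuous_apply_apply g s).mul
      (continuous_wordEval r l (g * s.val))

lemma continuous_E (r : ℕ) : Continuous (fun φ : Equiv.Perm (G r) => E r φ) := by
  have h0 : Continuous (fun φ : Equiv.Perm (G r) =>
      ((⇑φ : G r → G r), (⇑φ.symm : G r → G r))) := continuous_induced_dom
  have hc : Continuous (fun φ : Equiv.Perm (G r) => (⇑φ : G r → G r)) := h0.fst
  refine continuous_pi fun h => continuous_pi fun s => ?_
  exact (((continuous_apply h).comp hc).inv).mul ((continuous_apply (h * s.val)).comp hc)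

lemma norm_apply_le (r ρ : ℕ) (f : G r → G r) (hf1 : f 1 = 1)
    (hstep : ∀ (g s : G r), s ∈ SS r → ((f g)⁻¹ * f (g * s)).norm ≤ ρ) (g : G r) :
    (f g).norm ≤ ρ * g.norm := by
  have key : ∀ (l : List (SS r)) (g : G r),
      ((f g)⁻¹ * f (g * (l.map Subtype.val).prod)).norm ≤ ρ * l.length := by
    intro l
    induction l with
    | nil => intro g; simp
    | cons s l ih =>
      intro g
      have h1 : (f g)⁻¹ * f (g * ((s :: l).map Subtype.val).prod)
          = ((f g)⁻¹ * f (g * s.val)) * ((f (g * s.val))⁻¹ * f (g * s.val * (l.map Subtype.val).prod)) := by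
        simp only [List.map_cons, List.prod_cons, mul_assoc]
        group
      rw [h1]
      calc (((f g)⁻¹ * f (g * s.val)) * ((f (g * s.val))⁻¹ * f (g * s.val * (l.map Subtype.val).prod))).norm
          ≤ ((f g)⁻¹ * f (g * s.val)).norm + ((f (g * s.val))⁻¹ * f (g * s.val * (l.map Subtype.val).prod)).norm :=
            FreeGroup.norm_mul_le _ _
        _ ≤ ρ + ρ * l.length := add_le_add (hstep g s.val s.prop) (ih (g * s.val))
        _ = ρ * (s :: l).length := by simp [List.length_cons]; ring
  obtain ⟨l, hl, hlen, -⟩ := exists_list r g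
  have := key l 1
  rw [hf1, inv_one, one_mul, one_mul, hl, hlen] at this
  exact this

lemma wordEval_congr (r : ℕ) (x y : G r → A r) :
    ∀ (l : List (SS r)) (g : G r),
      (∀ p : List (SS r), p <+: l →
        x (g * (p.map Subtype.val).prod) = y (g * (p.map Subtype.val).prod)) →
      wordEval r x g l = wordEval r y g l
  | [], _, _ => rfl
  | s :: l, g, h => by
    have h0 := h [] List.nil_prefix
    simp only [List.map_nil, List.prod_nil, mul_one] at h0
    show x g s * wordEval r x (g * s.val) l = y g s * wordEval r y (g * s.val) l
    rw [h0]
    congr 1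
    refine wordEval_congr r x y l (g * s.val) fun p hp => ?_
    have := h (s :: p) (List.cons_prefix_cons.mpr ⟨rfl, hp⟩)
    simpa only [List.map_cons, List.prod_cons, mul_assoc] using this

lemma ball_finite (r N : ℕ) : {h : G r | h.norm ≤ N}.Finite := by
  have hsub : {h : G r | h.norm ≤ N}
      ⊆ FreeGroup.toWord ⁻¹' {l : List (Fin r × Bool) | l.length ≤ N} := fun h hh => hh
  exact Set.Finite.subset
    ((List.finite_length_le _ N).preimage FreeGroup.toWord_injective.injOn) hsub

/-- `sym_ρ(G)` with the topology induced by `ℰ`. -/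
def Prho (r ρ : ℕ) : Type := {φ : Equiv.Perm (G r) // InSymRho r ρ φ}

instance (r ρ : ℕ) : TopologicalSpace (Prho r ρ) :=
  TopologicalSpace.induced (fun φ : Prho r ρ => E r φ.1) inferInstance

lemma continuous_apply_Prho (r ρ : ℕ) (g : G r) :
    Continuous (fun φ : Prho r ρ => φ.1 g) := by
  obtain ⟨l, hl, -, -⟩ := exists_list r g
  have heq : (fun φ : Prho r ρ => φ.1 g)
      = (fun x : G r → A r => wordEval r x 1 l) ∘ (fun φ : Prho r ρ => E r φ.1) := by
    funext φ
    show φ.1 g = wordEval r (E r φ.1) 1 l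
    rw [← hl, wordEval_formula r φ.1 φ.2.1]
  rw [heq]
  exact (continuous_wordEval r l 1).comp continuous_induced_dom

lemma nhds_Prho (r ρ : ℕ) (φ : Prho r ρ) :
    𝓝 φ = Filter.comap (fun φ : Prho r ρ => E r φ.1) (𝓝 (E r φ.1)) :=
  nhds_induced _ _

lemma continuous_symm_apply_Prho (r ρ : ℕ) (g : G r) :
    Continuous (fun φ : Prho r ρ => φ.1.symm g) := by
  rw [continuous_discrete_rng]
  intro c
  rw [isOpen_iff_mem_nhds]
  intro φ₀ hφ₀
  have hc : φ₀.1.symm g = c := hφ₀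
  rw [nhds_Prho, Filter.mem_comap]
  set N := ρ * g.norm with hN
  refine ⟨{x : G r → A r | ∀ h : G r, h.norm ≤ N → x h = E r φ₀.1 h}, ?_, ?_⟩
  · -- this set is a neighbourhood of `E r φ₀.1`
    have heq : {x : G r → A r | ∀ h : G r, h.norm ≤ N → x h = E r φ₀.1 h}
        = ⋂ h ∈ {h : G r | h.norm ≤ N}, {x : G r → A r | x h = E r φ₀.1 h} := by
      ext x; simp [Set.mem_iInter]
    rw [heq]
    refine IsOpen.mem_nhds ?_ ?_
    · refine (ball_finite r N).isOpen_biInter fun h _ => ?_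
      have : {x : G r → A r | x h = E r φ₀.1 h}
          = (fun x : G r → A r => x h) ⁻¹' {E r φ₀.1 h} := by ext x; simp [Set.mem_preimage]
      rw [this]
      exact (continuous_apply h).isOpen_preimage _ (isOpen_discrete _)
    · simp [Set.mem_iInter]
  · -- the preimage is contained in the fibre
    rintro ψ hψ
    have hval : ∀ h : G r, h.norm ≤ N → ψ.1 h = φ₀.1 h := by
      intro h hh
      obtain ⟨l, hl, -, hpre⟩ := exists_list r h
      rw [← hl, wordEval_formula r ψ.1 ψ.2.1, wordEval_formula r φ₀.1 φ₀.2.1]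
      refine wordEval_congr r _ _ l 1 fun p hp => ?_
      rw [one_mul]
      exact hψ _ ((hpre p hp).trans hh)
    have hsym1 : φ₀.1.symm 1 = 1 := by
      rw [Equiv.symm_apply_eq, φ₀.2.1]
    have hnorm : (φ₀.1.symm g).norm ≤ N := by
      refine norm_apply_le r ρ (fun h => φ₀.1.symm h) hsym1 (fun h s hs => ?_) g
      exact (φ₀.2.2 h s hs).2
    have happ : ψ.1 (φ₀.1.symm g) = g := by
      rw [hval _ hnorm, Equiv.apply_symm_apply]
    show ψ.1.symm g = c
    rw [← hc]
    exact (Equiv.symm_apply_eq _).mpr happ.symm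

lemma continuous_val_Prho (r ρ : ℕ) :
    Continuous (fun φ : Prho r ρ => φ.1) := by
  apply continuous_induced_rng.mpr
  exact Continuous.prodMk
    (continuous_pi fun g => continuous_apply_Prho r ρ g)
    (continuous_pi fun g => continuous_symm_apply_Prho r ρ g)

/-- `ℰ` is an embedding:  (1) equivariant, `ℰ(Θ^h φ) = h·ℰ(φ)`;
(2) continuous and injective on `sym_e(G)`, with
`φ(s₁⋯s_n) = x_e(s₁) x_{s₁}(s₂) ⋯ x_{s₁⋯s_{n-1}}(s_n)` for `x = ℰ(φ)`;
moreover `ℰ(sym_ρ(G)) ⊆ 𝙰_ρ^G`, and `ℰ` restricted to `sym_ρ(G)` is a homeomorphism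
onto its image. -/
theorem statement11 (r ρ : ℕ) (hr : 1 ≤ r) :
    (∀ (h : G r) (φ : Equiv.Perm (G r)), φ 1 = 1 →
        E r (theta r h φ) = shift r h (E r φ)) ∧
    Continuous (fun φ : symE r => E r φ.val) ∧
    Function.Injective (fun φ : symE r => E r φ.val) ∧
    (∀ (φ : Equiv.Perm (G r)), φ 1 = 1 → ∀ l : List (SS r),
        φ ((l.map Subtype.val).prod) = wordEval r (E r φ) 1 l) ∧
    (∀ φ : Equiv.Perm (G r), InSymRho r ρ φ →
        ∀ (g : G r) (s : SS r), ((E r φ) g s).norm ≤ ρ) ∧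
    Topology.IsEmbedding
      (fun φ : {φ : Equiv.Perm (G r) // InSymRho r ρ φ} => E r φ.val) := by
  refine ⟨?_, ?_, ?_, ?_, ?_, ?_⟩
  · -- equivariance
    intro h φ _
    funext g s
    simp only [E, theta, shift, Equiv.trans_apply, Equiv.coe_mulLeft]
    group
  · -- continuity on symE
    exact (continuous_E r).comp continuous_subtype_val
  · -- injectivity on symE
    intro φ ψ h
    exact Subtype.ext (E_injective r φ.2 ψ.2 h)
  · -- word formula
    exact fun φ hφ l => wordEval_formula r φ hφ l
  · -- norm bound
    intro φ hφ g s
    exact (hφ.2 g s.val s.prop).1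
  · -- embedding
    refine ⟨⟨le_antisymm ?_ ?_⟩, ?_⟩
    · exact continuous_iff_le_induced.mp ((continuous_E r).comp continuous_subtype_val)
    · exact continuous_iff_le_induced.mp (continuous_val_Prho r ρ)
    · intro φ ψ h
      exact Subtype.ext (E_injective r φ.2.1 ψ.2.1 h)

end Stmt11
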